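/- Let d ≥ 1, T > 0, θ > 0 and let f : ℝ^d → ℝ be continuous and ℤ^d-periodic. Let u be a smooth classical solution of the heat equation with absorption f, diffusivity θ and initial value u_0 = u(·,0), and suppose u(x,t) > 0 for all (x,t). If ∂_t²(log u) vanishes identically on ℝ^d × (0,T), then there exists λ ∈ ℝ such that u(x,t) = u_0(x)e^{λt} for all (x,t) ∈ ℝ^d × [0,T], and (θ/2)Δ_x u_0 − f u_0 = λ u_0, i.e. u_0 is an eigenfunction of the Schrödinger operator S_{θ,f} = (θ/2)Δ_x − f. Equivalently: if u_0 does not lie in an eigenspace of S_{θ,f}, then ∂_t² log u is not identically zero. -/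

import Mathlib

open MeasureTheory Real Filter

noncomputable section

/-- Partial derivative in the `i`-th spatial coordinate. -/
def pder {d : ℕ} (i : Fin d) (v : (Fin d → ℝ) → ℝ) : (Fin d → ℝ) → ℝ :=
  fun x => deriv (fun s => v (Function.update x i s)) (x i)

/-- Spatial Laplacian `Δ_x = ∑ᵢ ∂²/∂xᵢ²`. -/
def lap {d : ℕ} (v : (Fin d → ℝ) → ℝ) : (Fin d → ℝ) → ℝ :=
  fun x => ∑ i : Fin d, pder i (pder i v) x

/-- Multi-index spatial derivative `∂^j`. -/
def mder {d : ℕ} (j : Fin d → ℕ) (v : (Fin d → ℝ) → ℝ) : (Fin d → ℝ) → ℝ :=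
  (List.finRange d).foldr (fun i acc => (pder i)^[j i] acc) v

/-- `ℤ^d`-periodicity of a function on `ℝ^d`. -/
def ZPer {d : ℕ} (F : (Fin d → ℝ) → ℝ) : Prop :=
  ∀ (x : Fin d → ℝ) (k : Fin d → ℤ), F (fun i => x i + (k i : ℝ)) = F x

/-- `ℤ^d`-periodicity in the space variable. -/
def ZPerSpace {d : ℕ} (u : (Fin d → ℝ) → ℝ → ℝ) : Prop :=
  ∀ t : ℝ, ZPer fun x => u x t

/-- The fundamental domain `[0,1]^d` of the torus. -/
def unitCube (d : ℕ) : Set (Fin d → ℝ) := Set.Icc 0 1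

/-- `L²`-norm on the torus. -/
def l2T {d : ℕ} (F : (Fin d → ℝ) → ℝ) : ℝ :=
  Real.sqrt (∫ x in unitCube d, (F x) ^ 2)

/-- `L²`-norm on `Q = 𝕋^d × (0,T)`. -/
def l2Q {d : ℕ} (T : ℝ) (u : (Fin d → ℝ) → ℝ → ℝ) : ℝ :=
  Real.sqrt (∫ t in Set.Ioc (0 : ℝ) T, ∫ x in unitCube d, (u x t) ^ 2)

/-- Supremum norm over space. -/
def supT {d : ℕ} (F : (Fin d → ℝ) → ℝ) : ℝ := ⨆ x, |F x|

/-- Supremum norm over `𝕋^d × [0,T]`. -/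
def supQ {d : ℕ} (T : ℝ) (u : (Fin d → ℝ) → ℝ → ℝ) : ℝ :=
  ⨆ x, ⨆ t ∈ Set.Icc (0 : ℝ) T, |u x t|

/-- Squared Sobolev `H^β`-norm on the torus:  `∑_{|j| ≤ β} ‖∂^j F‖²_{L²(𝕋^d)}`. -/
def hSobSq {d : ℕ} (β : ℕ) (F : (Fin d → ℝ) → ℝ) : ℝ :=
  ∑ j ∈ Finset.univ.filter (fun j : Fin d → Fin (β + 1) => (∑ i, (j i : ℕ)) ≤ β),
    ∫ x in unitCube d, (mder (fun i => (j i : ℕ)) F x) ^ 2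

/-- Sobolev `H^β`-norm on the torus. -/
def hSob {d : ℕ} (β : ℕ) (F : (Fin d → ℝ) → ℝ) : ℝ := Real.sqrt (hSobSq β F)

/-- Squared parabolic Sobolev `H^{2,1}(Q)`-norm. -/
def h21Sq {d : ℕ} (T : ℝ) (u : (Fin d → ℝ) → ℝ → ℝ) : ℝ :=
  (∫ t in Set.Ioc (0 : ℝ) T,
      ∑ j ∈ Finset.univ.filter (fun j : Fin d → Fin 3 => (∑ i, (j i : ℕ)) ≤ 2),
        ∫ x in unitCube d, (mder (fun i => (j i : ℕ)) (fun y => u y t) x) ^ 2)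
    + ∫ x in unitCube d, ∫ t in Set.Ioc (0 : ℝ) T, ((u x t) ^ 2 + (deriv (u x) t) ^ 2)

/-- Parabolic Sobolev `H^{2,1}(Q)`-norm. -/
def h21 {d : ℕ} (T : ℝ) (u : (Fin d → ℝ) → ℝ → ℝ) : ℝ := Real.sqrt (h21Sq T u)

/-- Smoothness of a function of space and time. -/
def SmoothQ {d : ℕ} (u : (Fin d → ℝ) → ℝ → ℝ) : Prop :=
  ContDiff ℝ (⊤ : ℕ∞) fun p : (Fin d → ℝ) × ℝ => u p.1 p.2

/-- A smooth classical solution of the heat equation with absorption `f`,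
diffusivity `θ` and initial value `u0`. -/
def HeatSol {d : ℕ} (T θ : ℝ) (f u0 : (Fin d → ℝ) → ℝ) (u : (Fin d → ℝ) → ℝ → ℝ) : Prop :=
  SmoothQ u ∧ ZPerSpace u ∧
    (∀ (x : Fin d → ℝ), ∀ t ∈ Set.Ioc (0 : ℝ) T,
      deriv (u x) t = θ / 2 * lap (fun y => u y t) x - f x * u x t) ∧
    ∀ x, u x 0 = u0 x

/-- A smooth solution of the inhomogeneous problem with forcing `g` and
zero initial value (`v = 𝓛_{θ,f}⁻¹ g`). -/
def InhomSol {d : ℕ} (T θ : ℝ) (f : (Fin d → ℝ) → ℝ) (g v : (Fin d → ℝ) → ℝ → ℝ) : Prop :=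
  SmoothQ v ∧ ZPerSpace v ∧
    (∀ (x : Fin d → ℝ), ∀ t ∈ Set.Ioc (0 : ℝ) T,
      deriv (v x) t = θ / 2 * lap (fun y => v y t) x - f x * v x t + g x t) ∧
    ∀ x, v x 0 = 0

/-- A link function: a smooth function `Φ : ℝ → (fmin, ∞)` with strictly positive
derivative and all derivatives bounded. -/
structure LinkFun where
  toFun : ℝ → ℝ
  fmin : ℝ
  fmin_pos : 0 < fmin
  smooth : ContDiff ℝ (⊤ : ℕ∞) toFun
  gt_fmin : ∀ x, fmin < toFun x
  deriv_pos : ∀ x, 0 < deriv toFun x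
  derivs_bdd : ∀ n : ℕ, 1 ≤ n → ∃ C, ∀ x, |iteratedDeriv n toFun x| ≤ C

/-- The linearized solution `I_{θ,F} h` in direction `h`, associated with a solution `u`. -/
def LinSol {d : ℕ} (T θ : ℝ) (Φ : LinkFun) (F h : (Fin d → ℝ) → ℝ)
    (u z : (Fin d → ℝ) → ℝ → ℝ) : Prop :=
  SmoothQ z ∧ ZPerSpace z ∧
    (∀ (x : Fin d → ℝ), ∀ t ∈ Set.Ioc (0 : ℝ) T,
      deriv (z x) t = θ / 2 * lap (fun y => z y t) x - Φ.toFun (F x) * z x t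
        + h x * deriv Φ.toFun (F x) * u x t) ∧
    ∀ x, z x 0 = 0

/-- The `θ`-derivative solution `K̇_θ F`, associated with a solution `u`. -/
def ThetaDerivSol {d : ℕ} (T θ : ℝ) (Φ : LinkFun) (F : (Fin d → ℝ) → ℝ)
    (u w : (Fin d → ℝ) → ℝ → ℝ) : Prop :=
  SmoothQ w ∧ ZPerSpace w ∧
    (∀ (x : Fin d → ℝ), ∀ t ∈ Set.Ioc (0 : ℝ) T,
      deriv (w x) t = θ / 2 * lap (fun y => w y t) x - Φ.toFun (F x) * w x t
        + 1 / 2 * lap (fun y => u y t) x) ∧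
    ∀ x, w x 0 = 0

/-- Dual Sobolev norm `‖G‖_{(H²)*}` on the torus. -/
def h2dual {d : ℕ} (G : (Fin d → ℝ) → ℝ) : ℝ :=
  sSup {r : ℝ | ∃ g : (Fin d → ℝ) → ℝ, ContDiff ℝ (⊤ : ℕ∞) g ∧ ZPer g ∧ hSob 2 g ≤ 1 ∧
    r = |∫ x in unitCube d, G x * g x|}

end


open Topology Set



theorem constOnIoo' {g : ℝ → ℝ} {a b : ℝ}
    (hg : ∀ t ∈ Set.Ioo a b, DifferentiableAt ℝ g t)
    (h0 : ∀ t ∈ Set.Ioo a b, deriv g t = 0)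
    {s t : ℝ} (hs : s ∈ Set.Ioo a b) (ht : t ∈ Set.Ioo a b) : g s = g t := by
  rcases lt_trichotomy s t with h | h | h
  · have hsub : Set.Icc s t ⊆ Set.Ioo a b := Set.Icc_subset_Ioo hs.1 ht.2
    obtain ⟨c, hc, hder⟩ := exists_deriv_eq_slope g h
      (fun y hy => (hg y (hsub hy)).continuousAt.continuousWithinAt)
      (fun y hy => ((hg y (hsub (Set.Ioo_subset_Icc_self hy))).differentiableWithinAt))
    rw [h0 c (hsub (Set.Ioo_subset_Icc_self hc))] at hder
    have := sub_ne_zero.mpr (ne_of_gt h)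
    field_simp at hder
    linarith
  · rw [h]
  · have hsub : Set.Icc t s ⊆ Set.Ioo a b := Set.Icc_subset_Ioo ht.1 hs.2
    obtain ⟨c, hc, hder⟩ := exists_deriv_eq_slope g h
      (fun y hy => (hg y (hsub hy)).continuousAt.continuousWithinAt)
      (fun y hy => ((hg y (hsub (Set.Ioo_subset_Icc_self hy))).differentiableWithinAt))
    rw [h0 c (hsub (Set.Ioo_subset_Icc_self hc))] at hder
    have := sub_ne_zero.mpr (ne_of_gt h)
    field_simp at hder
    linarith

theorem constOnIcc' {F : ℝ → ℝ} {T : ℝ} (hT : 0 < T) (hF : Continuous F)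
    (hd : ∀ t ∈ Set.Ioo (0:ℝ) T, DifferentiableAt ℝ F t)
    (h0 : ∀ t ∈ Set.Ioo (0:ℝ) T, deriv F t = 0) :
    ∀ t ∈ Set.Icc (0:ℝ) T, F t = F 0 := by
  have hmid : T / 2 ∈ Set.Ioo (0:ℝ) T := ⟨by linarith, by linarith⟩
  have hint : ∀ t ∈ Set.Ioo (0:ℝ) T, F t = F (T/2) :=
    fun t ht => constOnIoo' hd h0 ht hmid
  have hend : ∀ c : ℝ, c ∈ Set.Icc (0:ℝ) T → F c = F (T/2) := by
    intro c hc
    have hne : (𝓝[Set.Ioo (0:ℝ) T] c).NeBot := by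
      rw [← mem_closure_iff_nhdsWithin_neBot, closure_Ioo (ne_of_lt hT)]
      exact hc
    have h1 : Tendsto F (𝓝[Set.Ioo (0:ℝ) T] c) (𝓝 (F c)) :=
      (hF.continuousAt.continuousWithinAt)
    have h2 : Tendsto F (𝓝[Set.Ioo (0:ℝ) T] c) (𝓝 (F (T/2))) := by
      refine Tendsto.congr' ?_ tendsto_const_nhds
      filter_upwards [self_mem_nhdsWithin] with y hy using (hint y hy).symm
    exact tendsto_nhds_unique h1 h2
  intro t ht
  rw [hend t ht, hend 0 ⟨le_refl _, le_of_lt hT⟩]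

theorem deriv_mul_exp' (a b : ℝ → ℝ) (ha : ContDiff ℝ (⊤:ℕ∞) a) (hb : ContDiff ℝ (⊤:ℕ∞) b) (t : ℝ) :
    deriv (fun s => a s * Real.exp (b s * t))
      = fun s => (deriv a s + a s * (deriv b s * t)) * Real.exp (b s * t) := by
  funext s
  have ha' : HasDerivAt a (deriv a s) s := (ha.differentiable (by simp) s).hasDerivAt
  have hb' : HasDerivAt b (deriv b s) s := (hb.differentiable (by simp) s).hasDerivAt
  have hexp : HasDerivAt (fun s => Real.exp (b s * t)) (Real.exp (b s * t) * (deriv b s * t)) s :=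
    (hb'.mul_const t).exp
  have : deriv (fun s => a s * Real.exp (b s * t)) s = _ := (ha'.mul hexp).deriv
  rw [this]; ring

theorem deriv2_mul_exp' (a b : ℝ → ℝ) (ha : ContDiff ℝ (⊤:ℕ∞) a) (hb : ContDiff ℝ (⊤:ℕ∞) b) (t s : ℝ) :
    deriv (deriv (fun s => a s * Real.exp (b s * t))) s
      = (deriv (deriv a) s + (2 * deriv a s * deriv b s + a s * deriv (deriv b) s) * t
          + a s * (deriv b s)^2 * t^2) * Real.exp (b s * t) := by
  rw [deriv_mul_exp' a b ha hb t]
  have hA : ContDiff ℝ (⊤:ℕ∞) (deriv a) := (contDiff_infty_iff_deriv.mp ha).2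
  have hB : ContDiff ℝ (⊤:ℕ∞) (deriv b) := (contDiff_infty_iff_deriv.mp hb).2
  have ha' : HasDerivAt a (deriv a s) s := (ha.differentiable (by simp) s).hasDerivAt
  have hb' : HasDerivAt b (deriv b s) s := (hb.differentiable (by simp) s).hasDerivAt
  have hA' : HasDerivAt (deriv a) (deriv (deriv a) s) s :=
    (hA.differentiable (by simp) s).hasDerivAt
  have hB' : HasDerivAt (deriv b) (deriv (deriv b) s) s :=
    (hB.differentiable (by simp) s).hasDerivAt
  have hexp : HasDerivAt (fun s => Real.exp (b s * t)) (Real.exp (b s * t) * (deriv b s * t)) s :=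
    (hb'.mul_const t).exp
  have hin : HasDerivAt (fun s => deriv a s + a s * (deriv b s * t))
      (deriv (deriv a) s + (deriv a s * (deriv b s * t) + a s * (deriv (deriv b) s * t))) s :=
    hA'.add (ha'.mul (hB'.mul_const t))
  have : deriv (fun s => (deriv a s + a s * (deriv b s * t)) * Real.exp (b s * t)) s = _ :=
    (hin.mul hexp).deriv
  rw [this]; ring

theorem line_smooth' {d : ℕ} (x : Fin d → ℝ) (i : Fin d) :
    ContDiff ℝ (⊤:ℕ∞) (fun s : ℝ => Function.update x i s) := by
  rw [contDiff_pi]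
  intro j
  by_cases h : j = i
  · subst h
    simp only [Function.update_self]
    exact contDiff_id
  · have : (fun s : ℝ => Function.update x i s j) = fun _ => x j := by
      funext s; rw [Function.update_of_ne h]
    rw [this]; exact contDiff_const

theorem udt_smooth' {d : ℕ} (u : (Fin d → ℝ) → ℝ → ℝ)
    (hU : ContDiff ℝ (⊤:ℕ∞) (fun p : (Fin d → ℝ) × ℝ => u p.1 p.2)) :
    ContDiff ℝ (⊤:ℕ∞) (fun p : (Fin d → ℝ) × ℝ => deriv (u p.1) p.2) := by
  set U := fun p : (Fin d → ℝ) × ℝ => u p.1 p.2 with hUdef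
  have key : ∀ p : (Fin d → ℝ) × ℝ, deriv (u p.1) p.2 = fderiv ℝ U p (0, 1) := by
    intro p
    have hc : HasDerivAt (fun t : ℝ => ((p.1, t) : (Fin d → ℝ) × ℝ)) (0, 1) p.2 :=
      HasDerivAt.prodMk (hasDerivAt_const p.2 p.1) (hasDerivAt_id p.2)
    have hf : HasFDerivAt U (fderiv ℝ U p) p :=
      (hU.differentiable (by simp) p).hasFDerivAt
    have : HasDerivAt (fun t => U (p.1, t)) (fderiv ℝ U p (0, 1)) p.2 := by
      have := hf.comp_hasDerivAt p.2 (by simpa using hc)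
      exact this
    exact this.deriv
  have h2 : ContDiff ℝ (⊤:ℕ∞) (fun p : (Fin d → ℝ) × ℝ => fderiv ℝ U p (0, 1)) :=
    (hU.fderiv_right (by exact_mod_cast le_top)).clm_apply contDiff_const
  have heq : (fun p : (Fin d → ℝ) × ℝ => deriv (u p.1) p.2)
      = fun p : (Fin d → ℝ) × ℝ => fderiv ℝ U p (0, 1) := funext key
  rw [heq]; exact h2

theorem pder_pder {d : ℕ} (V : (Fin d → ℝ) → ℝ) (i : Fin d) (x : Fin d → ℝ) :
    pder i (pder i V) x = deriv (deriv (fun s => V (Function.update x i s))) (x i) := by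
  have h : (fun s => pder i V (Function.update x i s))
      = deriv (fun s => V (Function.update x i s)) := by
    funext s
    simp only [pder, Function.update_idem, Function.update_self]
  simp only [pder, Function.update_idem, Function.update_self]

/-- if `∂_t² log u ≡ 0`, then `u(x,t) = u₀(x) e^{λ t}` and `u₀` is an
eigenfunction of the Schrödinger operator `S_{θ,f} = (θ/2)Δ_x − f`. -/
theorem log_affine_implies_eigenfunction {d : ℕ} (hd : 1 ≤ d) (T θ : ℝ)
    (hT : 0 < T) (hθ : 0 < θ) (f : (Fin d → ℝ) → ℝ) (hf : Continuous f) (hfper : ZPer f)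
    (u : (Fin d → ℝ) → ℝ → ℝ) (hu : HeatSol T θ f (fun x => u x 0) u)
    (hpos : ∀ (x : Fin d → ℝ), ∀ t ∈ Set.Icc (0 : ℝ) T, 0 < u x t)
    (hlog : ∀ (x : Fin d → ℝ), ∀ t ∈ Set.Ioo (0 : ℝ) T,
      deriv (deriv fun s => Real.log (u x s)) t = 0) :
    ∃ lam : ℝ,
      (∀ (x : Fin d → ℝ), ∀ t ∈ Set.Icc (0 : ℝ) T, u x t = u x 0 * Real.exp (lam * t)) ∧
      ∀ x, θ / 2 * lap (fun y => u y 0) x - f x * u x 0 = lam * u x 0 := by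
  obtain ⟨hsm, hper, hpde, -⟩ := hu
  have hU : ContDiff ℝ (⊤:ℕ∞) (fun p : (Fin d → ℝ) × ℝ => u p.1 p.2) := hsm
  have hUdt : ContDiff ℝ (⊤:ℕ∞) (fun p : (Fin d → ℝ) × ℝ => deriv (u p.1) p.2) :=
    udt_smooth' u hU
  have hcurve : ∀ x : Fin d → ℝ, ContDiff ℝ (⊤:ℕ∞) (u x) := by
    intro x
    exact hU.comp (ContDiff.prodMk (contDiff_const : ContDiff ℝ (⊤:ℕ∞) fun _ : ℝ => x) contDiff_id)
  have hdcurve : ∀ x : Fin d → ℝ, ContDiff ℝ (⊤:ℕ∞) (fun r : ℝ => deriv (u x) r) := by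
    intro x
    exact hUdt.comp (ContDiff.prodMk (contDiff_const : ContDiff ℝ (⊤:ℕ∞) fun _ : ℝ => x) contDiff_id)
  have hT2 : (T/2) ∈ Set.Ioo (0:ℝ) T := ⟨by linarith, by linarith⟩
  set lam : (Fin d → ℝ) → ℝ := fun y => deriv (u y) (T/2) / u y (T/2) with hlamdef
  -- key 1 : deriv (u x) t = lam x * u x t on (0,T)
  have key1 : ∀ (x : Fin d → ℝ), ∀ t ∈ Set.Ioo (0:ℝ) T, deriv (u x) t = lam x * u x t := by
    intro x t ht
    set g : ℝ → ℝ := fun r => deriv (u x) r / u x r with hgdef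
    have hGg : ∀ s : ℝ, 0 < u x s → deriv (fun r => Real.log (u x r)) s = g s := by
      intro s hs
      have := (((hcurve x).differentiable (by simp) s).hasDerivAt).log
        (ne_of_gt hs)
      exact this.deriv
    have hgd : ∀ s : ℝ, 0 < u x s → DifferentiableAt ℝ g s := by
      intro s hs
      exact DifferentiableAt.div ((hdcurve x).differentiable (by simp) s)
        ((hcurve x).differentiable (by simp) s) (ne_of_gt hs)
    have hO : IsOpen {s : ℝ | 0 < u x s} := isOpen_Ioi.preimage (hcurve x).continuous
    have hGdiff : ∀ s ∈ Set.Ioo (0:ℝ) T, DifferentiableAt ℝ (deriv fun r => Real.log (u x r)) s := by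
      intro s hs
      have hsO : s ∈ {r : ℝ | 0 < u x r} := hpos x s ⟨le_of_lt hs.1, le_of_lt hs.2⟩
      have hev : (deriv fun r => Real.log (u x r)) =ᶠ[nhds s] g := by
        filter_upwards [hO.mem_nhds hsO] with r hr using hGg r hr
      exact (hgd s hsO).congr_of_eventuallyEq hev
    have hconst := constOnIoo' hGdiff (hlog x) ht hT2
    rw [hGg t (hpos x t ⟨le_of_lt ht.1, le_of_lt ht.2⟩),
        hGg (T/2) (hpos x (T/2) ⟨le_of_lt hT2.1, le_of_lt hT2.2⟩)] at hconst
    have hne : u x t ≠ 0 := ne_of_gt (hpos x t ⟨le_of_lt ht.1, le_of_lt ht.2⟩)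
    have hne2 : u x (T/2) ≠ 0 := ne_of_gt (hpos x (T/2) ⟨le_of_lt hT2.1, le_of_lt hT2.2⟩)
    have : g t = lam x := hconst
    rw [hgdef] at this
    field_simp at this
    linarith [this]
  -- key 2 : u x t = u x 0 * exp (lam x * t) on [0,T]
  have key2 : ∀ (x : Fin d → ℝ), ∀ t ∈ Set.Icc (0:ℝ) T,
      u x t = u x 0 * Real.exp (lam x * t) := by
    intro x t ht
    set F : ℝ → ℝ := fun r => u x r * Real.exp (-(lam x) * r) with hFdef
    have hFd : ∀ s : ℝ, HasDerivAt F
        (deriv (u x) s * Real.exp (-(lam x) * s)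
          + u x s * (Real.exp (-(lam x) * s) * (-(lam x)))) s := by
      intro s
      have h1 : HasDerivAt (u x) (deriv (u x) s) s :=
        ((hcurve x).differentiable (by simp) s).hasDerivAt
      have h2 : HasDerivAt (fun r : ℝ => -(lam x) * r) (-(lam x)) s := by
        simpa using (hasDerivAt_id s).const_mul (-(lam x))
      exact h1.mul h2.exp
    have hFc : Continuous F := by
      apply Continuous.mul (hcurve x).continuous
      exact Real.continuous_exp.comp (continuous_const.mul continuous_id)
    have hF0 : ∀ s ∈ Set.Ioo (0:ℝ) T, deriv F s = 0 := by
      intro s hs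
      rw [(hFd s).deriv, key1 x s hs]
      ring
    have hcc := constOnIcc' hT hFc (fun s _ => (hFd s).differentiableAt) hF0 t ht
    have hF0v : F 0 = u x 0 := by
      simp [hFdef]
    rw [hF0v] at hcc
    have hE : Real.exp (-(lam x) * t) * Real.exp (lam x * t) = 1 := by
      rw [← Real.exp_add]; ring_nf; exact Real.exp_zero
    calc u x t = u x t * (Real.exp (-(lam x) * t) * Real.exp (lam x * t)) := by
          rw [hE, mul_one]
      _ = (u x t * Real.exp (-(lam x) * t)) * Real.exp (lam x * t) := by ring
      _ = u x 0 * Real.exp (lam x * t) := by rw [show u x t * Real.exp (-(lam x) * t) = F t from rfl, hcc]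
  -- smoothness of line restrictions of lam
  have hLsmooth : ∀ (x : Fin d → ℝ) (i : Fin d),
      ContDiff ℝ (⊤:ℕ∞) (fun s : ℝ => lam (Function.update x i s)) := by
    intro x i
    have hnum : ContDiff ℝ (⊤:ℕ∞) (fun s : ℝ => deriv (u (Function.update x i s)) (T/2)) :=
      hUdt.comp (ContDiff.prodMk (line_smooth' x i) contDiff_const)
    have hden : ContDiff ℝ (⊤:ℕ∞) (fun s : ℝ => u (Function.update x i s) (T/2)) :=
      hU.comp (ContDiff.prodMk (line_smooth' x i) contDiff_const)
    exact hnum.div hden (fun s => ne_of_gt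
      (hpos (Function.update x i s) (T/2) ⟨le_of_lt hT2.1, le_of_lt hT2.2⟩))
  -- the main pointwise computation
  have key3 : ∀ x : Fin d → ℝ, (∀ i, pder i lam x = 0) ∧
      (θ / 2 * lap (fun y => u y 0) x - f x * u x 0 = lam x * u x 0) := by
    intro x
    set V0 : Fin d → ℝ → ℝ := fun i s => u (Function.update x i s) 0 with hV0def
    set L : Fin d → ℝ → ℝ := fun i s => lam (Function.update x i s) with hLdef
    have hV0s : ∀ i, ContDiff ℝ (⊤:ℕ∞) (V0 i) := fun i =>
      hU.comp (ContDiff.prodMk (line_smooth' x i) contDiff_const)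
    have hLs : ∀ i, ContDiff ℝ (⊤:ℕ∞) (L i) := fun i => hLsmooth x i
    have hu0 : 0 < u x 0 := hpos x 0 ⟨le_refl _, le_of_lt hT⟩
    have hV0x : ∀ i, V0 i (x i) = u x 0 := by
      intro i; simp only [hV0def, Function.update_eq_self]
    have hLx : ∀ i, L i (x i) = lam x := by
      intro i; simp only [hLdef, Function.update_eq_self]
    -- per-coordinate second derivative formula
    have hi : ∀ t ∈ Set.Icc (0:ℝ) T, ∀ i : Fin d,
        pder i (pder i (fun y => u y t)) x
          = (deriv (deriv (V0 i)) (x i)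
              + (2 * deriv (V0 i) (x i) * deriv (L i) (x i)
                  + u x 0 * deriv (deriv (L i)) (x i)) * t
              + u x 0 * (deriv (L i) (x i))^2 * t^2) * Real.exp (lam x * t) := by
      intro t ht i
      have hfun : (fun s => (fun y => u y t) (Function.update x i s))
          = fun s => V0 i s * Real.exp (L i s * t) :=
        funext fun s => key2 (Function.update x i s) t ht
      rw [pder_pder, hfun, deriv2_mul_exp' (V0 i) (L i) (hV0s i) (hLs i) t (x i),
        hV0x i, hLx i]
    -- the laplacian identity
    have hlapt : ∀ t ∈ Set.Icc (0:ℝ) T,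
        lap (fun y => u y t) x
          = ((∑ i, deriv (deriv (V0 i)) (x i))
              + (∑ i, (2 * deriv (V0 i) (x i) * deriv (L i) (x i)
                  + u x 0 * deriv (deriv (L i)) (x i))) * t
              + (∑ i, u x 0 * (deriv (L i) (x i))^2) * t^2) * Real.exp (lam x * t) := by
      intro t ht
      have hsum : lap (fun y => u y t) x = ∑ i,
          ((deriv (deriv (V0 i)) (x i)
              + (2 * deriv (V0 i) (x i) * deriv (L i) (x i)
                  + u x 0 * deriv (deriv (L i)) (x i)) * t
              + u x 0 * (deriv (L i) (x i))^2 * t^2) * Real.exp (lam x * t)) := by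
        simp only [lap]
        exact Finset.sum_congr rfl (fun i _ => hi t ht i)
      rw [hsum, ← Finset.sum_mul]
      congr 1
      rw [Finset.sum_add_distrib, Finset.sum_add_distrib, ← Finset.sum_mul, ← Finset.sum_mul]
    set A : ℝ := ∑ i, deriv (deriv (V0 i)) (x i) with hAdef
    set B : ℝ := ∑ i, (2 * deriv (V0 i) (x i) * deriv (L i) (x i)
        + u x 0 * deriv (deriv (L i)) (x i)) with hBdef
    set C : ℝ := ∑ i, u x 0 * (deriv (L i) (x i))^2 with hCdef
    -- the quadratic identity on (0,T)
    have heq : ∀ t ∈ Set.Ioo (0:ℝ) T,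
        θ / 2 * (A + B * t + C * t^2) - f x * u x 0 = lam x * u x 0 := by
      intro t ht
      have htIcc : t ∈ Set.Icc (0:ℝ) T := ⟨le_of_lt ht.1, le_of_lt ht.2⟩
      have hpde' := hpde x t ⟨ht.1, le_of_lt ht.2⟩
      rw [hlapt t htIcc, key1 x t ht, key2 x t htIcc] at hpde'
      have hE : (0:ℝ) < Real.exp (lam x * t) := Real.exp_pos _
      have h3 : (θ / 2 * (A + B * t + C * t^2) - f x * u x 0 - lam x * u x 0)
          * Real.exp (lam x * t) = 0 := by linear_combination -hpde'
      rcases mul_eq_zero.mp h3 with h | h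
      · linarith
      · exact absurd h (ne_of_gt hE)
    have ht1 : (T/4) ∈ Set.Ioo (0:ℝ) T := ⟨by linarith, by linarith⟩
    have ht3 : (3*T/4) ∈ Set.Ioo (0:ℝ) T := ⟨by linarith, by linarith⟩
    have e1 := heq (T/4) ht1
    have e2 := heq (T/2) hT2
    have e3 := heq (3*T/4) ht3
    have hCT : θ * (C * T^2) = 0 := by linear_combination 16 * e1 - 32 * e2 + 16 * e3
    have hC : C = 0 := by
      rcases mul_eq_zero.mp hCT with h | h
      · exact absurd h (ne_of_gt hθ)
      · rcases mul_eq_zero.mp h with h' | h'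
        · exact h'
        · exact absurd h' (pow_ne_zero 2 (ne_of_gt hT))
    have hBT : θ * (B * T) = 0 := by
      linear_combination (-8) * e1 + 8 * e2 - (3/4) * θ * T^2 * hC
    have hB : B = 0 := by
      rcases mul_eq_zero.mp hBT with h | h
      · exact absurd h (ne_of_gt hθ)
      · rcases mul_eq_zero.mp h with h' | h'
        · exact h'
        · exact absurd h' (ne_of_gt hT)
    constructor
    · -- all partial derivatives of lam vanish at x
      intro i
      have hsumsq : ∑ i, (deriv (L i) (x i))^2 = 0 := by
        have : u x 0 * ∑ i, (deriv (L i) (x i))^2 = 0 := by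
          rw [Finset.mul_sum]; rw [hCdef] at hC; exact hC
        rcases mul_eq_zero.mp this with h | h
        · exact absurd h (ne_of_gt hu0)
        · exact h
      have hzero : ∀ j ∈ Finset.univ, (deriv (L j) (x j))^2 = 0 :=
        (Finset.sum_eq_zero_iff_of_nonneg (fun j _ => sq_nonneg _)).mp hsumsq
      have := hzero i (Finset.mem_univ i)
      have hL0 : deriv (L i) (x i) = 0 := (pow_eq_zero_iff two_ne_zero).mp this
      simpa only [pder, hLdef] using hL0
    · -- the eigenvalue equation
      have hlap0 : lap (fun y => u y 0) x = A := by
        rw [hAdef]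
        simp only [lap]
        refine Finset.sum_congr rfl (fun i _ => ?_)
        rw [pder_pder]
      rw [hlap0]
      linarith [e2, hB, hC]
  -- lam is constant along coordinate lines
  have hlineconst : ∀ (x : Fin d → ℝ) (i : Fin d) (s : ℝ),
      lam (Function.update x i s) = lam x := by
    intro x i s
    have hdiff : Differentiable ℝ (fun s : ℝ => lam (Function.update x i s)) :=
      (hLsmooth x i).differentiable (by simp)
    have hz : ∀ r : ℝ, deriv (fun s : ℝ => lam (Function.update x i s)) r = 0 := by
      intro r
      have h := (key3 (Function.update x i r)).1 i
      simpa only [pder, Function.update_idem, Function.update_self] using h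
    have := is_const_of_deriv_eq_zero hdiff hz s (x i)
    simpa only [Function.update_eq_self] using this
  -- lam is globally constant
  have hagree : ∀ (s : Finset (Fin d)) (x y : Fin d → ℝ),
      (∀ i ∉ s, x i = y i) → lam x = lam y := by
    intro s
    induction s using Finset.induction_on with
    | empty =>
      intro x y h
      have : x = y := funext fun i => h i (Finset.notMem_empty i)
      rw [this]
    | @insert a s ha ih =>
      intro x y h
      calc lam x = lam (Function.update x a (y a)) := (hlineconst x a (y a)).symm
        _ = lam y := by
            apply ih
            intro i hi
            by_cases hia : i = a
            · subst hia; simp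
            · rw [Function.update_of_ne hia]
              exact h i (by simp [hi, hia])
  have hconst : ∀ x y : Fin d → ℝ, lam x = lam y := fun x y =>
    hagree Finset.univ x y (fun i hi => absurd (Finset.mem_univ i) hi)
  refine ⟨lam (fun _ => 0), ?_, ?_⟩
  · intro x t ht
    rw [key2 x t ht, hconst x (fun _ => 0)]
  · intro x
    have := (key3 x).2
    rw [hconst x (fun _ => 0)] at this
    exact this
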